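/- Let (a,b) ∈ 𝔸 × 𝔸 satisfy condition (ab). Then there exist constants δ⋆ ∈ (0,1], L > 0 and M > 0, depending only on |a| and |b|, with the following property: for every δ ∈ [0, δ⋆] and all nonnegative reals C₀, C₁, C₂, C₃, C₄ satisfying |C₁ + δ·C₂ + Re(a)·C₃ + (Re(b) − δ)·C₄| ≤ C₀ and |Im(a)·C₃ + Im(b)·C₄| ≤ C₀, one has 0 ≤ C₁ + L·C₃ + L·C₄ ≤ M·C₀. -/

import Mathlib

lemma exists_beta (a b : ℂ)
    (ha : ¬(a.re ≤ 0 ∧ a.im = 0)) (hb : ¬(b.re ≤ 0 ∧ b.im = 0))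
    (hab : a.im * b.im ≥ 0 ∨ (a.im * b.im < 0 ∧ b.re > b.im / a.im * a.re)) :
    ∃ β : ℝ, 0 < a.re + β * a.im ∧ 0 < b.re + β * b.im := by
  rcases eq_or_ne a.im 0 with h0a | h0a
  · have hra : 0 < a.re := by
      by_contra h; exact ha ⟨le_of_not_gt h, h0a⟩
    rcases eq_or_ne b.im 0 with h0b | h0b
    · have hrb : 0 < b.re := by
        by_contra h; exact hb ⟨le_of_not_gt h, h0b⟩
      exact ⟨0, by simpa [h0a], by simpa [h0b]⟩
    · refine ⟨(|b.re| + 1) / b.im, by simpa [h0a], ?_⟩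
      have hc : (|b.re| + 1) / b.im * b.im = |b.re| + 1 := div_mul_cancel₀ _ h0b
      nlinarith [neg_abs_le b.re]
  · rcases eq_or_ne b.im 0 with h0b | h0b
    · have hrb : 0 < b.re := by
        by_contra h; exact hb ⟨le_of_not_gt h, h0b⟩
      refine ⟨(|a.re| + 1) / a.im, ?_, by simpa [h0b]⟩
      have hc : (|a.re| + 1) / a.im * a.im = |a.re| + 1 := div_mul_cancel₀ _ h0a
      nlinarith [neg_abs_le a.re]
    · rcases hab with hsame | ⟨hopp, hcond⟩
      · have hp : 0 < a.im * b.im := lt_of_le_of_ne hsame (by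
          intro h; exact h0a (by
            rcases mul_eq_zero.mp h.symm with h | h
            · exact h
            · exact absurd h h0b))
        set t : ℝ := |a.re| + |b.re| + 1 with ht
        have htpos : 0 < t := by positivity
        rcases lt_or_gt_of_ne h0a with hneg | hpos
        · -- a.im < 0, so b.im < 0
          have hbneg : b.im < 0 := by nlinarith
          set m : ℝ := max a.im b.im with hm
          have hmneg : m < 0 := by
            simp only [hm, max_lt_iff]; exact ⟨hneg, hbneg⟩
          refine ⟨t / m, ?_, ?_⟩
          · have h1 : t / m * m = t := div_mul_cancel₀ _ (ne_of_lt hmneg)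
            have h2 : t / m < 0 := div_neg_of_pos_of_neg htpos hmneg
            have h3 : a.im ≤ m := le_max_left _ _
            have key : t / m * m ≤ t / m * a.im := mul_le_mul_of_nonpos_left h3 h2.le
            rw [h1] at key
            linarith [neg_abs_le a.re, abs_nonneg b.re]
          · have h1 : t / m * m = t := div_mul_cancel₀ _ (ne_of_lt hmneg)
            have h2 : t / m < 0 := div_neg_of_pos_of_neg htpos hmneg
            have h3 : b.im ≤ m := le_max_right _ _
            have key : t / m * m ≤ t / m * b.im := mul_le_mul_of_nonpos_left h3 h2.le
            rw [h1] at key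
            linarith [neg_abs_le b.re, abs_nonneg a.re]
        · -- a.im > 0, so b.im > 0
          have hbpos : 0 < b.im := by nlinarith
          set m : ℝ := min a.im b.im with hm
          have hmpos : 0 < m := lt_min hpos hbpos
          refine ⟨t / m, ?_, ?_⟩
          · have h1 : t / m * m = t := div_mul_cancel₀ _ (ne_of_gt hmpos)
            have h2 : 0 < t / m := div_pos htpos hmpos
            have h3 : m ≤ a.im := min_le_left _ _
            have key : t / m * m ≤ t / m * a.im := mul_le_mul_of_nonneg_left h3 h2.le
            rw [h1] at key
            linarith [neg_abs_le a.re, abs_nonneg b.re]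
          · have h1 : t / m * m = t := div_mul_cancel₀ _ (ne_of_gt hmpos)
            have h2 : 0 < t / m := div_pos htpos hmpos
            have h3 : m ≤ b.im := min_le_right _ _
            have key : t / m * m ≤ t / m * b.im := mul_le_mul_of_nonneg_left h3 h2.le
            rw [h1] at key
            linarith [neg_abs_le b.re, abs_nonneg a.re]
      · -- opposite signs
        set c : ℝ := b.re - b.im / a.im * a.re with hc
        have hcpos : 0 < c := by simp only [hc]; linarith
        have hbim : b.im ≠ 0 := by intro h; rw [h] at hopp; simp at hopp
        have haim : a.im ≠ 0 := by intro h; rw [h] at hopp; simp at hopp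
        set ε : ℝ := c / (2 * |b.im|) with hε
        have hεpos : 0 < ε := by
          apply div_pos hcpos
          positivity
        rcases lt_or_gt_of_ne haim with hneg | hpos
        · have hbpos : 0 < b.im := by nlinarith
          refine ⟨-a.re / a.im - ε, ?_, ?_⟩
          · have h1 : -a.re / a.im * a.im = -a.re := div_mul_cancel₀ _ haim
            nlinarith
          · have h1 : b.im / a.im * a.im = b.im := div_mul_cancel₀ _ haim
            have h2 : -a.re / a.im * a.im = -a.re := div_mul_cancel₀ _ haim
            have h3 : ε * b.im = c / 2 := by
              rw [hε, abs_of_pos hbpos]; field_simp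
            have : b.re + (-a.re / a.im - ε) * b.im
                = b.re + (-a.re/a.im) * b.im - ε * b.im := by ring
            have h4 : (-a.re/a.im) * b.im = - (b.im / a.im * a.re) := by
              ring
            nlinarith
        · have hbneg : b.im < 0 := by nlinarith
          refine ⟨-a.re / a.im + ε, ?_, ?_⟩
          · have h1 : -a.re / a.im * a.im = -a.re := div_mul_cancel₀ _ haim
            nlinarith
          · have h3 : ε * b.im = -(c / 2) := by
              rw [hε, abs_of_neg hbneg]; field_simp
            have h4 : (-a.re/a.im) * b.im = - (b.im / a.im * a.re) := by
              ring
            nlinarith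

/-- Lemma (lemAB): if `(a,b) ∈ 𝔸²` satisfies condition (ab), there exist
`δ⋆ ∈ (0,1]`, `L > 0`, `M > 0` such that the two linear estimates imply
`0 ≤ C₁ + L C₃ + L C₄ ≤ M C₀`. -/
theorem stmt7 (a b : ℂ)
    (ha : ¬(a.re ≤ 0 ∧ a.im = 0)) (hb : ¬(b.re ≤ 0 ∧ b.im = 0))
    (hab : a.im * b.im ≥ 0 ∨ (a.im * b.im < 0 ∧ b.re > b.im / a.im * a.re)) :
    ∃ δstar : ℝ, δstar ∈ Set.Ioc (0 : ℝ) 1 ∧ ∃ L : ℝ, 0 < L ∧ ∃ M : ℝ, 0 < M ∧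
      ∀ δ : ℝ, δ ∈ Set.Icc 0 δstar →
      ∀ C₀ C₁ C₂ C₃ C₄ : ℝ, 0 ≤ C₀ → 0 ≤ C₁ → 0 ≤ C₂ → 0 ≤ C₃ → 0 ≤ C₄ →
        |C₁ + δ * C₂ + a.re * C₃ + (b.re - δ) * C₄| ≤ C₀ →
        |a.im * C₃ + b.im * C₄| ≤ C₀ →
        0 ≤ C₁ + L * C₃ + L * C₄ ∧ C₁ + L * C₃ + L * C₄ ≤ M * C₀ := by
  obtain ⟨β, hβa, hβb⟩ := exists_beta a b ha hb hab
  set La : ℝ := a.re + β * a.im with hLa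
  set Lb : ℝ := b.re + β * b.im with hLb
  refine ⟨min 1 (Lb / 2), ⟨lt_min one_pos (by linarith), min_le_left _ _⟩,
    min La (Lb / 2), lt_min hβa (by linarith), 1 + |β|, by positivity, ?_⟩
  intro δ hδ C₀ C₁ C₂ C₃ C₄ h0 h1 h2 h3 h4 habs1 habs2
  obtain ⟨hδ0, hδ1⟩ := hδ
  have hδLb : δ ≤ Lb / 2 := le_trans hδ1 (min_le_right _ _)
  set L : ℝ := min La (Lb / 2) with hL
  have hLpos : 0 < L := lt_min hβa (by linarith)
  constructor
  · nlinarith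
  · have hE1 : C₁ + δ * C₂ + a.re * C₃ + (b.re - δ) * C₄ ≤ C₀ := (abs_le.mp habs1).2
    have hE2 : β * (a.im * C₃ + b.im * C₄) ≤ |β| * C₀ := by
      calc β * (a.im * C₃ + b.im * C₄) ≤ |β * (a.im * C₃ + b.im * C₄)| := le_abs_self _
        _ = |β| * |a.im * C₃ + b.im * C₄| := abs_mul _ _
        _ ≤ |β| * C₀ := mul_le_mul_of_nonneg_left habs2 (abs_nonneg _)
    have hLLa : L ≤ La := min_le_left _ _
    have hLLb : L ≤ Lb / 2 := min_le_right _ _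
    have k3 : L * C₃ ≤ La * C₃ := mul_le_mul_of_nonneg_right hLLa h3
    have k4 : L * C₄ ≤ (Lb - δ) * C₄ := mul_le_mul_of_nonneg_right (by linarith) h4
    nlinarith
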